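/- The union G₁ ∪ G₂ ∪ G₃ is contained in G and has cardinality exactly (1/2)·q^2·(q−1)·(q^2 + q − 1) = (q^5 − 2q^3 + q^2)/2; consequently |G| ≥ (q^5 − 2q^3 + q^2)/2. -/

import Mathlib

/-- Tuples `(i, j, k, m, n₁, …, n_{q-2})` of nonnegative integers; the coordinate
`n : Fin (q-2) → ℕ` encodes `n_s` via `n_s = n ⟨s-1, _⟩`, i.e. index `t : Fin (q-2)`
corresponds to the paper's index `s = t + 1`. -/
abbrev GKTup (q : ℕ) := ℕ × ℕ × ℕ × ℕ × (Fin (q - 2) → ℕ)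

/-- `φ(i,j,k,m,n₁,…,n_{q-2}) = i q^3 + j + k q + m (q^2+1) + Σ_{s=1}^{q-2} n_s (s+1) q^2 + 1`. -/
def gkPhi (q : ℕ) (t : GKTup q) : ℕ :=
  t.1 * q ^ 3 + t.2.1 + t.2.2.1 * q + t.2.2.2.1 * (q ^ 2 + 1) +
    (∑ s : Fin (q - 2), t.2.2.2.2 s * ((s.1 + 2) * q ^ 2)) + 1

/-- The weight `i + j + k + m q + Σ_{s=1}^{q-2} n_s ((s+1) q - s)`. -/
def gkWt (q : ℕ) (t : GKTup q) : ℕ :=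
  t.1 + t.2.1 + t.2.2.1 + t.2.2.2.1 * q +
    ∑ s : Fin (q - 2), t.2.2.2.2 s * ((s.1 + 2) * q - (s.1 + 1))

/-- The set `𝒢` of tuples with `j ≤ q - 1` and weight at most `q^2 - 2`. -/
def gkCalG (q : ℕ) : Set (GKTup q) :=
  {t | t.2.1 ≤ q - 1 ∧ gkWt q t ≤ q ^ 2 - 2}

/-- The set of gaps `G = φ(𝒢)`. -/
def gkG (q : ℕ) : Set ℕ := gkPhi q '' gkCalG q

/-- `𝒢₁`: tuples in `𝒢` with `j = 0` and all `n_s = 0`. -/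
def gkCalG1 (q : ℕ) : Set (GKTup q) :=
  {t | t ∈ gkCalG q ∧ t.2.1 = 0 ∧ ∀ s, t.2.2.2.2 s = 0}

/-- `𝒢₂`: tuples in `𝒢` with `1 ≤ j ≤ q - 1`, `k ≤ q - 1`, `j + m ≤ q - 1` and all `n_s = 0`. -/
def gkCalG2 (q : ℕ) : Set (GKTup q) :=
  {t | t ∈ gkCalG q ∧ 1 ≤ t.2.1 ∧ t.2.1 ≤ q - 1 ∧ t.2.2.1 ≤ q - 1 ∧
    t.2.1 + t.2.2.2.1 ≤ q - 1 ∧ ∀ s, t.2.2.2.2 s = 0}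

/-- `𝒢₃`: tuples in `𝒢` with `m = 0`, `k ≤ q - 1`, exactly one `n_s = 1` (the other `n`'s
being zero) and `i + k + (s+1) q ≥ q^2 - 1`. -/
def gkCalG3 (q : ℕ) : Set (GKTup q) :=
  {t | t ∈ gkCalG q ∧ t.2.2.2.1 = 0 ∧ t.2.2.1 ≤ q - 1 ∧
    ∃ s : Fin (q - 2), t.2.2.2.2 s = 1 ∧ (∀ s', s' ≠ s → t.2.2.2.2 s' = 0) ∧
      q ^ 2 - 1 ≤ t.1 + t.2.2.1 + (s.1 + 2) * q}


def gkS1 (n : ℕ) : ℕ := ∑ j ∈ Finset.range n, (j+1)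

lemma gkS1_two (n : ℕ) : 2 * gkS1 n = n * (n+1) := by
  induction n with
  | zero => simp [gkS1]
  | succ n ih => rw [gkS1, Finset.sum_range_succ, ← gkS1, Nat.mul_add, ih]; ring

lemma gkK (n c : ℕ) (h : n ≤ c + 1) :
    2 * ((∑ k ∈ Finset.range n, (c - k) : ℕ) : ℤ) = 2*n*c - n*n + n := by
  induction n with
  | zero => simp
  | succ n ih =>
    have h2 := ih (by omega)
    rw [Finset.sum_range_succ]
    have h3 : ((c - n : ℕ) : ℤ) = (c:ℤ) - n := by omega
    push_cast [h3] at h2 ⊢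
    linear_combination h2

lemma gkF1 (q : ℕ) (hq : 1 ≤ q) (n : ℕ) :
    12 * ((∑ m ∈ Finset.range n, gkS1 (m*q+q-1) : ℕ) : ℤ) =
      (q:ℤ)*q*n*(n-1)*(2*n-1) + 3*q*(2*q-1)*n*(n-1) + 6*n*q*(q-1) := by
  induction n with
  | zero => simp
  | succ n ih =>
    rw [Finset.sum_range_succ, Nat.cast_add]
    push_cast [Nat.cast_succ]
    have hN : ((n*q+q-1 : ℕ) : ℤ) = (n:ℤ)*q+q-1 := by omega
    have h2 : (2 * gkS1 (n*q+q-1) : ℤ) = ((n*q+q-1:ℕ):ℤ) * ((n*q+q-1:ℕ):ℤ) + ((n*q+q-1:ℕ):ℤ) := by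
      exact_mod_cast congrArg (Nat.cast : ℕ → ℤ) (by rw [gkS1_two]; ring)
    rw [hN] at h2
    push_cast at ih h2 ⊢
    linear_combination ih + 6 * h2

lemma gkM (q j : ℕ) : ∀ n, n + j + 1 ≤ q →
    12 * ((∑ m ∈ Finset.range n, ∑ k ∈ Finset.range q, (q*q-2-j-m*q-k) : ℕ) : ℤ) =
      12*(q:ℤ)*n*((q:ℤ)*q-2-j) - 6*q*q*n*(n-1) - 6*n*q*(q-1) := by
  intro n
  induction n with
  | zero => intro _; simp
  | succ n ih =>
    intro hn
    have hmul : (n+j+2)*q ≤ q*q := Nat.mul_le_mul_right q (by omega)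
    have hexp : (n+j+2)*q = n*q+j*q+2*q := by ring
    have hc : q ≤ (q*q-2-j-n*q) + 1 := by omega
    have hK := gkK q (q*q-2-j-n*q) hc
    have hcast : ((q*q-2-j-n*q : ℕ) : ℤ) = (q:ℤ)*q-2-j-(n:ℤ)*q := by omega
    rw [hcast] at hK
    rw [Finset.sum_range_succ, Nat.cast_add]
    push_cast at ih hK ⊢
    linear_combination ih (by omega) + 6 * hK

lemma gkJ (q : ℕ) (hq : 2 ≤ q) : ∀ N, N ≤ q - 1 →
    12 * ((∑ j ∈ Finset.range N, ∑ m ∈ Finset.range (q-1-j), ∑ k ∈ Finset.range q,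
        (q*q-2-j-m*q-k) : ℕ) : ℤ) =
      6*(q:ℤ)*N*((q:ℤ)-1)*((q:ℤ)*q+q-3) + 3*q*(5-4*(q:ℤ))*N*(N-1) - q*(q-2)*N*(N-1)*(2*N-1) := by
  intro N
  induction N with
  | zero => intro _; simp
  | succ N ih =>
    intro hN
    have hM := gkM q N (q-1-N) (by omega)
    have hcast : ((q-1-N : ℕ) : ℤ) = (q:ℤ)-1-N := by omega
    rw [hcast] at hM
    rw [Finset.sum_range_succ, Nat.cast_add]
    push_cast at ih hM ⊢
    linear_combination ih (by omega) + hM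

lemma gkF3 (q : ℕ) : ∀ n, 12 * ((∑ t ∈ Finset.range n, ∑ d ∈ Finset.range (t+1), (t+1-d)*q : ℕ) : ℤ)
    = 2*(q:ℤ)*n*(n+1)*(n+2) := by
  intro n
  induction n with
  | zero => simp
  | succ n ih =>
    have h1 : (∑ d ∈ Finset.range (n+1), (n+1-d)*q) = (∑ d ∈ Finset.range (n+1), (n+1-d))*q := by
      rw [Finset.sum_mul]
    have hK := gkK (n+1) (n+1) (by omega)
    rw [Finset.sum_range_succ, Nat.cast_add, h1]
    push_cast at ih hK ⊢
    linear_combination ih + 6*(q:ℤ)*hK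

-- Q1 and psi1
def gkQ1 (q : ℕ) : Finset (Σ _ : ℕ, Σ _ : ℕ, ℕ) :=
  (Finset.range q).sigma fun m => (Finset.range (m*q+q-1)).sigma fun T => Finset.range (T+1)

def gkPsi1 (q : ℕ) (x : Σ _ : ℕ, Σ _ : ℕ, ℕ) : GKTup q :=
  (x.2.1 - x.2.2, 0, x.2.2, q-1-x.1, fun _ => 0)

lemma gkWt_zero (q i j k m : ℕ) : gkWt q (i,j,k,m,fun _ => 0) = i+j+k+m*q := by
  simp [gkWt]

lemma gkCalG1_eq (q : ℕ) (hq : 2 ≤ q) : gkCalG1 q = ↑((gkQ1 q).image (gkPsi1 q)) := by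
  have hpow : q^2 = q*q := sq q
  ext t
  simp only [Finset.coe_image, Set.mem_image, Finset.mem_coe, gkQ1, Finset.mem_sigma,
    Finset.mem_range]
  constructor
  · rintro ⟨⟨hj, hwt⟩, hj0, hn⟩
    obtain ⟨i, j, k, m, n⟩ := t
    simp only at hj hj0 hn hwt ⊢
    subst hj0
    have hnf : n = fun _ => 0 := funext hn
    subst hnf
    rw [gkWt_zero, hpow] at hwt
    have hmq : m < q := by
      by_contra hc
      push_neg at hc
      have h2 : q*q ≤ m*q := Nat.mul_le_mul_right q hc
      have h3 : 2*2 ≤ q*q := Nat.mul_le_mul hq hq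
      omega
    have hsub : (q-1-m)*q + m*q + q = q*q := by
      have e : ((q-1-m)+m+1)*q = (q-1-m)*q + m*q + q := by ring
      rw [← e]
      congr 1
      omega
    refine ⟨⟨q-1-m, i+k, k⟩, ⟨?_, ?_, ?_⟩, ?_⟩ <;> try dsimp only
    · omega
    · omega
    · omega
    · simp only [gkPsi1, Prod.mk.injEq, and_true, true_and]
      omega
  · rintro ⟨⟨m', T, k⟩, ⟨h1, h2, h3⟩, rfl⟩
    dsimp only at h1 h2 h3
    have hsub : (q-1-m')*q + m'*q + q = q*q := by
      have e : ((q-1-m')+m'+1)*q = (q-1-m')*q + m'*q + q := by ring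
      rw [← e]
      congr 1
      omega
    refine ⟨⟨?_, ?_⟩, rfl, fun _ => rfl⟩
    · show (0:ℕ) ≤ q - 1
      omega
    · show gkWt q (T-k, 0, k, q-1-m', fun _ => 0) ≤ q^2-2
      rw [gkWt_zero, hpow]
      omega

lemma gkPsi1_inj (q : ℕ) (hq : 2 ≤ q) : Set.InjOn (gkPsi1 q) ↑(gkQ1 q) := by
  rintro ⟨m, T, k⟩ hx ⟨m', T', k'⟩ hy h
  simp only [Finset.mem_coe, gkQ1, Finset.mem_sigma, Finset.mem_range] at hx hy
  obtain ⟨h1, h2, h3⟩ := hx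
  obtain ⟨h1', h2', h3'⟩ := hy
  simp only [gkPsi1, Prod.mk.injEq] at h
  obtain ⟨e1, -, e3, e4, -⟩ := h
  have hm : m = m' := by omega
  subst hm
  have hk : k = k' := e3
  subst hk
  have hT : T = T' := by omega
  subst hT
  rfl

def gkQ2 (q : ℕ) : Finset (Σ _ : ℕ, Σ _ : ℕ, Σ _ : ℕ, ℕ) :=
  (Finset.range (q-1)).sigma fun j => (Finset.range (q-1-j)).sigma fun m =>
    (Finset.range q).sigma fun k => Finset.range (q*q-2-j-m*q-k)

def gkPsi2 (q : ℕ) (x : Σ _ : ℕ, Σ _ : ℕ, Σ _ : ℕ, ℕ) : GKTup q :=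
  (x.2.2.2, x.1+1, x.2.2.1, x.2.1, fun _ => 0)

lemma gkCalG2_eq (q : ℕ) (hq : 2 ≤ q) : gkCalG2 q = ↑((gkQ2 q).image (gkPsi2 q)) := by
  have hpow : q^2 = q*q := sq q
  ext t
  simp only [Finset.coe_image, Set.mem_image, Finset.mem_coe, gkQ2, Finset.mem_sigma,
    Finset.mem_range]
  constructor
  · rintro ⟨⟨hj, hwt⟩, hj1, hj2, hk, hjm, hn⟩
    obtain ⟨i, j, k, m, n⟩ := t
    simp only at hj hwt hj1 hj2 hk hjm hn ⊢
    have hnf : n = fun _ => 0 := funext hn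
    subst hnf
    rw [gkWt_zero, hpow] at hwt
    have hmul : (j+m+1)*q ≤ q*q := Nat.mul_le_mul_right q (by omega)
    have hexp : (j+m+1)*q = j*q + m*q + q := by ring
    refine ⟨⟨j-1, m, k, i⟩, ⟨?_, ?_, ?_, ?_⟩, ?_⟩ <;> try dsimp only
    · omega
    · omega
    · omega
    · have e : j - 1 = j - 1 := rfl
      -- i < q*q-2-(j-1)-m*q-k
      have hjq : j*q ≥ q := by
        calc q = 1*q := (one_mul q).symm
        _ ≤ j*q := Nat.mul_le_mul_right q hj1
      omega
    · simp only [gkPsi2, Prod.mk.injEq, and_true, true_and]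
      omega
  · rintro ⟨⟨j, m, k, i⟩, ⟨h1, h2, h3, h4⟩, rfl⟩
    dsimp only at h1 h2 h3 h4
    have hmul : (j+m+2)*q ≤ q*q := Nat.mul_le_mul_right q (by omega)
    have hexp : (j+m+2)*q = j*q + m*q + 2*q := by ring
    refine ⟨⟨?_, ?_⟩, ?_, ?_, ?_, ?_, fun _ => rfl⟩
    · show j+1 ≤ q - 1
      omega
    · show gkWt q (i, j+1, k, m, fun _ => 0) ≤ q^2-2
      rw [gkWt_zero, hpow]
      omega
    · show 1 ≤ j+1
      omega
    · show j+1 ≤ q-1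
      omega
    · show k ≤ q-1
      omega
    · show (j+1) + m ≤ q-1
      omega

lemma gkPsi2_inj (q : ℕ) : Set.InjOn (gkPsi2 q) ↑(gkQ2 q) := by
  rintro ⟨j, m, k, i⟩ hx ⟨j', m', k', i'⟩ hy h
  simp only [gkPsi2, Prod.mk.injEq] at h
  obtain ⟨e1, e2, e3, e4, -⟩ := h
  have : j = j' := by omega
  subst this
  subst e1; subst e3; subst e4
  rfl

def gkQ3 (q : ℕ) : Finset (Σ _ : ℕ, Σ _ : ℕ, Σ _ : ℕ, ℕ) :=
  (Finset.range (q-2)).sigma fun t => (Finset.range (t+1)).sigma fun d =>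
    (Finset.range (t+1-d)).sigma fun _j => Finset.range q

def gkPsi3 (q : ℕ) (x : Σ _ : ℕ, Σ _ : ℕ, Σ _ : ℕ, ℕ) : GKTup q :=
  (q*q-1-(x.1+2)*q + x.2.1 - x.2.2.2, x.2.2.1, x.2.2.2, 0,
    fun s => if s.1 = x.1 then 1 else 0)

lemma gkIndSum (q t0v : ℕ) (h : t0v < q - 2) (c : Fin (q-2) → ℕ) :
    (∑ s : Fin (q-2), (if s.1 = t0v then 1 else 0) * c s) = c ⟨t0v, h⟩ := by
  rw [Finset.sum_eq_single (⟨t0v, h⟩ : Fin (q-2))]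
  · simp
  · intro b _ hb
    rw [if_neg (fun hh => hb (Fin.ext hh)), zero_mul]
  · intro h'
    exact absurd (Finset.mem_univ _) h'

lemma gkWt_ind (q i j k t0v : ℕ) (h : t0v < q - 2) :
    gkWt q (i,j,k,0,fun s => if s.1 = t0v then 1 else 0) = i+j+k+((t0v+2)*q - (t0v+1)) := by
  simp only [gkWt, gkIndSum q t0v h]
  ring

lemma gkPhi_ind (q i j k t0v : ℕ) (h : t0v < q - 2) :
    gkPhi q (i,j,k,0,fun s => if s.1 = t0v then 1 else 0)
      = i*q^3 + j + k*q + (t0v+2)*q^2 + 1 := by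
  simp only [gkPhi, gkIndSum q t0v h]
  ring

lemma gkCalG3_eq (q : ℕ) (hq : 2 ≤ q) : gkCalG3 q = ↑((gkQ3 q).image (gkPsi3 q)) := by
  have hpow : q^2 = q*q := sq q
  ext t
  simp only [Finset.coe_image, Set.mem_image, Finset.mem_coe, gkQ3, Finset.mem_sigma,
    Finset.mem_range]
  constructor
  · rintro ⟨⟨hj, hwt⟩, hm0, hk, s0, hn1, hn0, hlow⟩
    obtain ⟨i, j, k, m, n⟩ := t
    simp only at hj hwt hm0 hk hn1 hn0 hlow ⊢
    subst hm0
    have hnf : n = fun s => if s.1 = s0.1 then 1 else 0 := by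
      funext s
      by_cases hs : s = s0
      · subst hs; simp [hn1]
      · rw [if_neg (fun hh => hs (Fin.ext hh))]; exact hn0 s hs
    subst hnf
    have hs0 : s0.1 < q - 2 := s0.isLt
    rw [gkWt_ind q i j k s0.1 hs0, hpow] at hwt
    rw [hpow] at hlow
    have hmul : (s0.1+2)*q ≤ (q-1)*q := Nat.mul_le_mul_right q (by omega)
    have hq1 : (q-1)*q + q = q*q := by
      have e : ((q-1)+1)*q = (q-1)*q + q := by ring
      rw [← e]; congr 1; omega
    have hgeP : s0.1+2 ≤ (s0.1+2)*q := Nat.le_mul_of_pos_right _ (by omega)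
    refine ⟨⟨s0.1, i+k-(q*q-1-(s0.1+2)*q), j, k⟩, ⟨?_, ?_, ?_, ?_⟩, ?_⟩ <;> try dsimp only
    · omega
    · omega
    · omega
    · omega
    · simp only [gkPsi3, Prod.mk.injEq, and_true, true_and]
      omega
  · rintro ⟨⟨t0v, d, j, k⟩, ⟨h1, h2, h3, h4⟩, rfl⟩
    dsimp only at h1 h2 h3 h4
    have hmul : (t0v+2)*q ≤ (q-1)*q := Nat.mul_le_mul_right q (by omega)
    have hq1 : (q-1)*q + q = q*q := by
      have e : ((q-1)+1)*q = (q-1)*q + q := by ring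
      rw [← e]; congr 1; omega
    have hgeP : t0v+2 ≤ (t0v+2)*q := Nat.le_mul_of_pos_right _ (by omega)
    refine ⟨⟨?_, ?_⟩, rfl, ?_, ⟨t0v, h1⟩, ?_, ?_, ?_⟩
    · show j ≤ q - 1
      omega
    · show gkWt q (q*q-1-(t0v+2)*q + d - k, j, k, 0, fun s => if s.1 = t0v then 1 else 0) ≤ q^2-2
      rw [gkWt_ind q _ j k t0v h1, hpow]
      omega
    · show k ≤ q - 1
      omega
    · show (if ((⟨t0v, h1⟩ : Fin (q-2)) : Fin (q-2)).1 = t0v then 1 else 0) = 1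
      simp
    · intro s' hs'
      show (if s'.1 = t0v then 1 else 0) = 0
      rw [if_neg (fun hh => hs' (Fin.ext hh))]
    · show q^2 - 1 ≤ (q*q-1-(t0v+2)*q + d - k) + k + (t0v+2)*q
      rw [hpow]
      omega

lemma gkPsi3_inj (q : ℕ) (hq : 2 ≤ q) : Set.InjOn (gkPsi3 q) ↑(gkQ3 q) := by
  rintro ⟨t0, d, j, k⟩ hx ⟨t0', d', j', k'⟩ hy h
  simp only [Finset.mem_coe, gkQ3, Finset.mem_sigma, Finset.mem_range] at hx hy
  obtain ⟨h1, h2, h3, h4⟩ := hx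
  obtain ⟨h1', h2', h3', h4'⟩ := hy
  simp only [gkPsi3, Prod.mk.injEq] at h
  obtain ⟨e1, e2, e3, -, e5⟩ := h
  have ht0 : t0 = t0' := by
    have := congrFun e5 ⟨t0, h1⟩
    simp only at this
    by_contra hne
    simp [hne] at this
  subst ht0
  subst e2; subst e3
  have hmul : (t0+2)*q ≤ (q-1)*q := Nat.mul_le_mul_right q (by omega)
  have hq1 : (q-1)*q + q = q*q := by
    have e : ((q-1)+1)*q = (q-1)*q + q := by ring
    rw [← e]; congr 1; omega
  have hd : d = d' := by omega
  subst hd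
  rfl

lemma gkQ1_card (q : ℕ) : (gkQ1 q).card = ∑ m ∈ Finset.range q, gkS1 (m*q+q-1) := by
  simp [gkQ1, Finset.card_sigma, gkS1]

lemma gkQ2_card (q : ℕ) : (gkQ2 q).card
    = ∑ j ∈ Finset.range (q-1), ∑ m ∈ Finset.range (q-1-j), ∑ k ∈ Finset.range q,
        (q*q-2-j-m*q-k) := by
  simp [gkQ2, Finset.card_sigma]

lemma gkQ3_card (q : ℕ) : (gkQ3 q).card
    = ∑ t ∈ Finset.range (q-2), ∑ d ∈ Finset.range (t+1), (t+1-d)*q := by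
  simp [gkQ3, Finset.card_sigma, Finset.sum_const, Nat.smul_one_eq_cast]

lemma gkDigit (b x y u v : ℕ) (hu : u < b) (hv : v < b) (h : x*b+u = y*b+v) :
    x = y ∧ u = v := by
  have hb : 0 < b := lt_of_le_of_lt (Nat.zero_le u) hu
  have h1 : u = v := by
    have e1 : (x*b+u) % b = u := by rw [mul_comm, Nat.mul_add_mod, Nat.mod_eq_of_lt hu]
    have e2 : (y*b+v) % b = v := by rw [mul_comm, Nat.mul_add_mod, Nat.mod_eq_of_lt hv]
    have h2 := congrArg (· % b) h
    try simp only at h2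
    rw [e1, e2] at h2
    exact h2
  subst h1
  have h3 : x*b = y*b := by omega
  exact ⟨Nat.eq_of_mul_eq_mul_right hb h3, rfl⟩

lemma gkSplit {q A A' B B' r r' : ℕ} (hB : B < q*q) (hB' : B' < q*q) (hr : r < q) (hr' : r' < q)
    (h : ((A*(q*q)+B)*q + r) + 1 = ((A'*(q*q)+B')*q + r') + 1) : A = A' ∧ B = B' ∧ r = r' := by
  have h0 : (A*(q*q)+B)*q + r = (A'*(q*q)+B')*q + r' := by omega
  obtain ⟨h1, h2⟩ := gkDigit q _ _ _ _ hr hr' h0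
  obtain ⟨h3, h4⟩ := gkDigit (q*q) _ _ _ _ hB hB' h1
  exact ⟨h3, h4, h2⟩

lemma gkDec1 {q : ℕ} (hq : 2 ≤ q) {t : GKTup q} (ht : t ∈ gkCalG1 q) :
    ∃ i k m : ℕ, t = (i, 0, k, m, fun _ => 0) ∧
      gkPhi q t = ((i*(q*q) + (m*q+k))*q + m) + 1 ∧
      m*q+k < q*q ∧ m < q ∧ i + k + m*q ≤ q*q - 2 := by
  have hpow : q^2 = q*q := sq q
  obtain ⟨i, j, k, m, n⟩ := t
  obtain ⟨⟨hj, hwt⟩, hj0, hn⟩ := ht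
  simp only at hj hwt hj0 hn
  subst hj0
  have hnf : n = fun _ => 0 := funext hn
  subst hnf
  rw [gkWt_zero, hpow] at hwt
  have hqq : 2*2 ≤ q*q := Nat.mul_le_mul hq hq
  have hmq : m < q := by
    by_contra hc
    push_neg at hc
    have h2 : q*q ≤ m*q := Nat.mul_le_mul_right q hc
    omega
  refine ⟨i, k, m, rfl, ?_, by omega, hmq, by omega⟩
  show i * q ^ 3 + 0 + k * q + m * (q ^ 2 + 1) +
      (∑ s : Fin (q - 2), (fun _ => 0) s * ((s.1 + 2) * q ^ 2)) + 1 = _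
  simp only [zero_mul, Finset.sum_const_zero, hpow]
  ring

lemma gkDec2 {q : ℕ} (hq : 2 ≤ q) {t : GKTup q} (ht : t ∈ gkCalG2 q) :
    ∃ i j k m : ℕ, t = (i, j, k, m, fun _ => 0) ∧
      gkPhi q t = ((i*(q*q) + (m*q+k))*q + (j+m)) + 1 ∧
      m*q+k < q*q ∧ j+m < q ∧ 1 ≤ j ∧ k < q ∧ i + j + k + m*q ≤ q*q - 2 := by
  have hpow : q^2 = q*q := sq q
  obtain ⟨i, j, k, m, n⟩ := t
  obtain ⟨⟨hjb, hwt⟩, hj1, hj2, hk, hjm, hn⟩ := ht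
  simp only at hjb hwt hj1 hj2 hk hjm hn
  have hnf : n = fun _ => 0 := funext hn
  subst hnf
  rw [gkWt_zero, hpow] at hwt
  have hmul : (m+1)*q ≤ q*q := Nat.mul_le_mul_right q (by omega)
  have hexp : (m+1)*q = m*q + q := by ring
  refine ⟨i, j, k, m, rfl, ?_, by omega, by omega, by omega, by omega, by omega⟩
  show i * q ^ 3 + j + k * q + m * (q ^ 2 + 1) +
      (∑ s : Fin (q - 2), (fun _ => 0) s * ((s.1 + 2) * q ^ 2)) + 1 = _
  simp only [zero_mul, Finset.sum_const_zero, hpow]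
  ring

lemma gkDec3 {q : ℕ} (hq : 2 ≤ q) {t : GKTup q} (ht : t ∈ gkCalG3 q) :
    ∃ (i j k t0v : ℕ) (h0 : t0v < q - 2), t = (i, j, k, 0, fun s => if s.1 = t0v then 1 else 0) ∧
      gkPhi q t = ((i*(q*q) + ((t0v+2)*q+k))*q + j) + 1 ∧
      (t0v+2)*q+k < q*q ∧ j < q ∧ k < q ∧ t0v+2 < q ∧
      q*q-1 ≤ i + k + (t0v+2)*q ∧ i + j + k + (t0v+2)*q ≤ q*q - 2 + (t0v+1) := by
  have hpow : q^2 = q*q := sq q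
  obtain ⟨i, j, k, m, n⟩ := t
  obtain ⟨⟨hjb, hwt⟩, hm0, hk, s0, hn1, hn0, hlow⟩ := ht
  simp only at hjb hwt hm0 hk hn1 hn0 hlow
  subst hm0
  have hnf : n = fun s => if s.1 = s0.1 then 1 else 0 := by
    funext s
    by_cases hs : s = s0
    · subst hs; simp [hn1]
    · rw [if_neg (fun hh => hs (Fin.ext hh))]; exact hn0 s hs
  subst hnf
  have hs0 : s0.1 < q - 2 := s0.isLt
  rw [gkWt_ind q i j k s0.1 hs0, hpow] at hwt
  rw [hpow] at hlow
  have hmul : (s0.1+2)*q ≤ (q-1)*q := Nat.mul_le_mul_right q (by omega)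
  have hq1 : (q-1)*q + q = q*q := by
    have e : ((q-1)+1)*q = (q-1)*q + q := by ring
    rw [← e]; congr 1; omega
  have hgeP : s0.1+2 ≤ (s0.1+2)*q := Nat.le_mul_of_pos_right _ (by omega)
  refine ⟨i, j, k, s0.1, hs0, rfl, ?_, by omega, by omega, by omega, by omega, by omega, by omega⟩
  rw [gkPhi_ind q i j k s0.1 hs0, hpow]
  ring

lemma gkInj11 {q : ℕ} (hq : 2 ≤ q) {t t' : GKTup q} (ht : t ∈ gkCalG1 q) (ht' : t' ∈ gkCalG1 q)
    (h : gkPhi q t = gkPhi q t') : t = t' := by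
  obtain ⟨i, k, m, rfl, hφ, hB, hr, hw⟩ := gkDec1 hq ht
  obtain ⟨i', k', m', rfl, hφ', hB', hr', hw'⟩ := gkDec1 hq ht'
  rw [hφ, hφ'] at h
  obtain ⟨e1, e2, e3⟩ := gkSplit hB hB' hr hr' h
  subst e3
  have : k = k' := by omega
  subst this; subst e1; rfl

lemma gkInj22 {q : ℕ} (hq : 2 ≤ q) {t t' : GKTup q} (ht : t ∈ gkCalG2 q) (ht' : t' ∈ gkCalG2 q)
    (h : gkPhi q t = gkPhi q t') : t = t' := by
  obtain ⟨i, j, k, m, rfl, hφ, hB, hr, hj1, hk, hw⟩ := gkDec2 hq ht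
  obtain ⟨i', j', k', m', rfl, hφ', hB', hr', hj1', hk', hw'⟩ := gkDec2 hq ht'
  rw [hφ, hφ'] at h
  obtain ⟨e1, e2, e3⟩ := gkSplit hB hB' hr hr' h
  obtain ⟨f1, f2⟩ := gkDigit q _ _ _ _ hk hk' e2
  subst f1; subst f2; subst e1
  have : j = j' := by omega
  subst this; rfl

lemma gkInj33 {q : ℕ} (hq : 2 ≤ q) {t t' : GKTup q} (ht : t ∈ gkCalG3 q) (ht' : t' ∈ gkCalG3 q)
    (h : gkPhi q t = gkPhi q t') : t = t' := by
  obtain ⟨i, j, k, t0, h0, rfl, hφ, hB, hr, hk, ht2, hlo, hup⟩ := gkDec3 hq ht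
  obtain ⟨i', j', k', t0', h0', rfl, hφ', hB', hr', hk', ht2', hlo', hup'⟩ := gkDec3 hq ht'
  rw [hφ, hφ'] at h
  obtain ⟨e1, e2, e3⟩ := gkSplit hB hB' hr hr' h
  obtain ⟨f1, f2⟩ := gkDigit q _ _ _ _ hk hk' e2
  have : t0 = t0' := by omega
  subst this; subst f2; subst e1; subst e3; rfl

lemma gkDisj12 {q : ℕ} (hq : 2 ≤ q) {t t' : GKTup q} (ht : t ∈ gkCalG1 q) (ht' : t' ∈ gkCalG2 q)
    (h : gkPhi q t = gkPhi q t') : False := by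
  obtain ⟨i, k, m, rfl, hφ, hB, hr, hw⟩ := gkDec1 hq ht
  obtain ⟨i', j', k', m', rfl, hφ', hB', hr', hj1', hk', hw'⟩ := gkDec2 hq ht'
  rw [hφ, hφ'] at h
  obtain ⟨e1, e2, e3⟩ := gkSplit hB hB' hr hr' h
  -- e3 : m = j' + m', e2 : m*q+k = m'*q+k'
  have hmq : m*q = j'*q + m'*q := by rw [e3]; ring
  have hjq : q ≤ j'*q := by
    calc q = 1*q := (one_mul q).symm
    _ ≤ j'*q := Nat.mul_le_mul_right q hj1'
  omega

lemma gkDisj13 {q : ℕ} (hq : 2 ≤ q) {t t' : GKTup q} (ht : t ∈ gkCalG1 q) (ht' : t' ∈ gkCalG3 q)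
    (h : gkPhi q t = gkPhi q t') : False := by
  obtain ⟨i, k, m, rfl, hφ, hB, hr, hw⟩ := gkDec1 hq ht
  obtain ⟨i', j', k', t0', h0', rfl, hφ', hB', hr', hk', ht2', hlo', hup'⟩ := gkDec3 hq ht'
  rw [hφ, hφ'] at h
  obtain ⟨e1, e2, e3⟩ := gkSplit hB hB' hr hr' h
  have hqq : 2*2 ≤ q*q := Nat.mul_le_mul hq hq
  omega

lemma gkDisj23 {q : ℕ} (hq : 2 ≤ q) {t t' : GKTup q} (ht : t ∈ gkCalG2 q) (ht' : t' ∈ gkCalG3 q)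
    (h : gkPhi q t = gkPhi q t') : False := by
  obtain ⟨i, j, k, m, rfl, hφ, hB, hr, hj1, hk, hw⟩ := gkDec2 hq ht
  obtain ⟨i', j', k', t0', h0', rfl, hφ', hB', hr', hk', ht2', hlo', hup'⟩ := gkDec3 hq ht'
  rw [hφ, hφ'] at h
  obtain ⟨e1, e2, e3⟩ := gkSplit hB hB' hr hr' h
  obtain ⟨f1, f2⟩ := gkDigit q _ _ _ _ hk hk' e2
  have hmq : m*q = (t0'+2)*q := by rw [f1]
  have hqq : 2*2 ≤ q*q := Nat.mul_le_mul hq hq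
  omega

lemma gkPhiInj {q : ℕ} (hq : 2 ≤ q) :
    Set.InjOn (gkPhi q) (gkCalG1 q ∪ gkCalG2 q ∪ gkCalG3 q) := by
  rintro t ((ht | ht) | ht) t' ((ht' | ht') | ht') h
  · exact gkInj11 hq ht ht' h
  · exact absurd (gkDisj12 hq ht ht' h) (by simp)
  · exact absurd (gkDisj13 hq ht ht' h) (by simp)
  · exact absurd (gkDisj12 hq ht' ht h.symm) (by simp)
  · exact gkInj22 hq ht ht' h
  · exact absurd (gkDisj23 hq ht ht' h) (by simp)
  · exact absurd (gkDisj13 hq ht' ht h.symm) (by simp)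
  · exact absurd (gkDisj23 hq ht' ht h.symm) (by simp)
  · exact gkInj33 hq ht ht' h

lemma gkCalG_finite (q : ℕ) (hq : 2 ≤ q) : (gkCalG q).Finite := by
  have hfun : ({f : Fin (q-2) → ℕ | ∀ s, f s ≤ q*q}).Finite := by
    have hsub : {f : Fin (q-2) → ℕ | ∀ s, f s ≤ q*q} ⊆ Set.pi Set.univ (fun _ => Set.Iic (q*q)) := by
      intro f hf s _
      exact hf s
    exact Set.Finite.subset (Set.Finite.pi (fun _ => Set.finite_Iic _)) hsub
  have hbig : (Set.Iic (q*q) ×ˢ Set.Iic (q*q) ×ˢ Set.Iic (q*q) ×ˢ Set.Iic (q*q) ×ˢ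
      {f : Fin (q-2) → ℕ | ∀ s, f s ≤ q*q} : Set (GKTup q)).Finite :=
    (Set.finite_Iic _).prod ((Set.finite_Iic _).prod ((Set.finite_Iic _).prod
      ((Set.finite_Iic _).prod hfun)))
  refine hbig.subset ?_
  rintro ⟨i,j,k,m,n⟩ ⟨hj, hwt⟩
  have hpow : q^2 = q*q := sq q
  simp only [gkWt, hpow] at hj hwt
  have hm : m ≤ m*q := Nat.le_mul_of_pos_right m (by omega)
  have hn : ∀ s : Fin (q-2), n s ≤ ∑ s', n s' * ((s'.1+2)*q - (s'.1+1)) := by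
    intro s
    calc n s ≤ n s * ((s.1+2)*q - (s.1+1)) := by
          have h2 : (s.1+2)*2 ≤ (s.1+2)*q := Nat.mul_le_mul_left _ hq
          exact Nat.le_mul_of_pos_right _ (by omega)
    _ ≤ _ := Finset.single_le_sum (f := fun s' => n s' * ((s'.1+2)*q - (s'.1+1)))
          (fun _ _ => Nat.zero_le _) (Finset.mem_univ s)
  simp only [Set.mem_prod, Set.mem_Iic, Set.mem_setOf_eq]
  refine ⟨by omega, by omega, by omega, by omega, fun s => ?_⟩
  have := hn s
  omega

/-- `G₁ ∪ G₂ ∪ G₃ ⊆ G`, the union has cardinality exactly `(q^5 - 2q^3 + q^2)/2`, and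
consequently `|G| ≥ (q^5 - 2q^3 + q^2)/2`. -/
theorem gk_union_card (q : ℕ) (hq : IsPrimePow q) :
    (gkPhi q '' gkCalG1 q) ∪ (gkPhi q '' gkCalG2 q) ∪ (gkPhi q '' gkCalG3 q) ⊆ gkG q ∧
    ((gkPhi q '' gkCalG1 q) ∪ (gkPhi q '' gkCalG2 q) ∪ (gkPhi q '' gkCalG3 q)).ncard
      = (q ^ 5 - 2 * q ^ 3 + q ^ 2) / 2 ∧
    (q ^ 5 - 2 * q ^ 3 + q ^ 2) / 2 ≤ (gkG q).ncard := by
  have hq2 : 2 ≤ q := hq.two_le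
  have h1 := gkCalG1_eq q hq2
  have h2 := gkCalG2_eq q hq2
  have h3 := gkCalG3_eq q hq2
  have hfin1 : (gkCalG1 q).Finite := by rw [h1]; exact Finset.finite_toSet _
  have hfin2 : (gkCalG2 q).Finite := by rw [h2]; exact Finset.finite_toSet _
  have hfin3 : (gkCalG3 q).Finite := by rw [h3]; exact Finset.finite_toSet _
  have hsubU : gkCalG1 q ∪ gkCalG2 q ∪ gkCalG3 q ⊆ gkCalG q := by
    rintro t ((ht | ht) | ht)
    exacts [ht.1, ht.1, ht.1]
  have himg : gkPhi q '' gkCalG1 q ∪ gkPhi q '' gkCalG2 q ∪ gkPhi q '' gkCalG3 q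
      = gkPhi q '' (gkCalG1 q ∪ gkCalG2 q ∪ gkCalG3 q) := by
    rw [Set.image_union, Set.image_union]
  have hsub : gkPhi q '' (gkCalG1 q ∪ gkCalG2 q ∪ gkCalG3 q) ⊆ gkG q :=
    Set.image_mono hsubU
  have hd12 : Disjoint (gkCalG1 q) (gkCalG2 q) := by
    rw [Set.disjoint_left]
    rintro t ⟨_, hj0, _⟩ ⟨_, hj1, _⟩
    omega
  have hd3 : Disjoint (gkCalG1 q ∪ gkCalG2 q) (gkCalG3 q) := by
    rw [Set.disjoint_left]
    rintro t (⟨_, _, hn⟩ | ⟨_, _, _, _, _, hn⟩) ⟨_, _, _, s0, hn1, _⟩ <;>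
      rw [hn s0] at hn1 <;> exact one_ne_zero hn1.symm
  have hcard : (gkCalG1 q ∪ gkCalG2 q ∪ gkCalG3 q).ncard
      = (gkQ1 q).card + (gkQ2 q).card + (gkQ3 q).card := by
    rw [Set.ncard_union_eq hd3 (hfin1.union hfin2) hfin3, Set.ncard_union_eq hd12 hfin1 hfin2,
      h1, h2, h3, Set.ncard_coe_finset, Set.ncard_coe_finset, Set.ncard_coe_finset,
      Finset.card_image_of_injOn (gkPsi1_inj q hq2), Finset.card_image_of_injOn (gkPsi2_inj q),
      Finset.card_image_of_injOn (gkPsi3_inj q hq2)]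
  have e1 := gkF1 q (by omega) q
  have e2 := gkJ q hq2 (q-1) (le_refl _)
  have e3 := gkF3 q (q-2)
  rw [← gkQ1_card] at e1
  rw [← gkQ2_card] at e2
  rw [← gkQ3_card] at e3
  have hc1 : ((q-1 : ℕ) : ℤ) = (q : ℤ) - 1 := by omega
  have hc2 : ((q-2 : ℕ) : ℤ) = (q : ℤ) - 2 := by omega
  rw [hc1] at e2
  rw [hc2] at e3
  have key : 12 * (((gkQ1 q).card + (gkQ2 q).card + (gkQ3 q).card : ℕ) : ℤ)
      = 6 * ((q:ℤ)^5 + (q:ℤ)^2) - 12 * (q:ℤ)^3 := by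
    push_cast
    linear_combination e1 + e2 + e3
  have key2 : 12 * ((gkQ1 q).card + (gkQ2 q).card + (gkQ3 q).card) + 12 * q^3
      = 6 * q^5 + 6 * q^2 := by
    have : (12 * (((gkQ1 q).card + (gkQ2 q).card + (gkQ3 q).card : ℕ) : ℤ) + 12 * (q:ℤ)^3
        = 6 * (q:ℤ)^5 + 6 * (q:ℤ)^2) := by linarith [key]
    exact_mod_cast this
  have hval : (gkQ1 q).card + (gkQ2 q).card + (gkQ3 q).card = (q^5 - 2*q^3 + q^2)/2 := by
    have h53 : 2*q^3 ≤ q^5 := by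
      calc 2*q^3 ≤ q^2*q^3 := Nat.mul_le_mul_right _ (by nlinarith)
      _ = q^5 := by ring
    omega
  have conj2 : (gkPhi q '' gkCalG1 q ∪ gkPhi q '' gkCalG2 q ∪ gkPhi q '' gkCalG3 q).ncard
      = (q^5 - 2*q^3 + q^2)/2 := by
    rw [himg, Set.ncard_image_of_injOn (gkPhiInj hq2), hcard, hval]
  refine ⟨himg ▸ hsub, conj2, ?_⟩
  have hGfin : (gkG q).Finite := (gkCalG_finite q hq2).image _
  calc (q^5 - 2*q^3 + q^2)/2
      = (gkPhi q '' gkCalG1 q ∪ gkPhi q '' gkCalG2 q ∪ gkPhi q '' gkCalG3 q).ncard := conj2.symm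
    _ ≤ (gkG q).ncard := Set.ncard_le_ncard (himg ▸ hsub) hGfin
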